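/- Let U = [u₁,...,u_K] ∈ ℝ^{P×K} and V = [v₁,...,v_K] ∈ ℝ^{Q×K} be in block-n TT format and A in matrix TT format, with slice matrices U^{(m)}_{i_m}, A^{(m)}_{i_m,j_m}, V^{(m)}_{j_m} for m ≠ n. Define Z^{(m)} = Σ_{i_m,j_m} U^{(m)}_{i_m} ⊗ A^{(m)}_{i_m,j_m} ⊗ V^{(m)}_{j_m}. Then the (k₁,k₂) entry of UᵀAV equals Z^{(1)} ⋯ Z^{(n-1)} (Σ_{i_n,j_n} U^{(n)}_{k₁,i_n} ⊗ A^{(n)}_{i_n,j_n} ⊗ V^{(n)}_{k₂,j_n}) Z^{(n+1)} ⋯ Z^{(N)}. -/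

import Mathlib

open Matrix

set_option maxHeartbeats 1000000

noncomputable def chainProd (T : ℕ → Type) [∀ n, Fintype (T n)] [DecidableEq (T 0)]
    (M : ∀ n, Matrix (T n) (T (n + 1)) ℝ) : (k : ℕ) → Matrix (T 0) (T k) ℝ
  | 0 => 1
  | k + 1 => chainProd T M k * M k

noncomputable def matEntry {α β : Type} [Fintype α] [Fintype β]
    (M : Matrix α β ℝ) : ℝ := ∑ a, ∑ b, M a b

lemma chainProd_congr (T : ℕ → Type) [∀ n, Fintype (T n)] [DecidableEq (T 0)]
    (M M' : ∀ n, Matrix (T n) (T (n + 1)) ℝ) (k : ℕ) (h : ∀ m < k, M m = M' m) :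
    chainProd T M k = chainProd T M' k := by
  induction k with
  | zero => rfl
  | succ k ih =>
      show chainProd T M k * M k = chainProd T M' k * M' k
      rw [ih (fun m hm => h m (hm.trans (Nat.lt_succ_self k))), h k (Nat.lt_succ_self k)]

lemma sum_prod3 {P1 P2 P3 : Type} [Fintype P1] [Fintype P2] [Fintype P3]
    (F : P1 → ℝ) (G : P2 → ℝ) (H : P3 → ℝ) :
    ∑ y : P1 × P2 × P3, F y.1 * G y.2.1 * H y.2.2
      = (∑ x, F x) * (∑ x, G x) * (∑ x, H x) := by
  rw [Fintype.sum_prod_type]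
  calc ∑ a : P1, ∑ z : P2 × P3, F a * G z.1 * H z.2
      = ∑ a : P1, F a * ∑ z : P2 × P3, G z.1 * H z.2 := by
        refine Finset.sum_congr rfl fun a _ => ?_
        rw [Finset.mul_sum]
        exact Finset.sum_congr rfl fun z _ => by ring
    _ = (∑ x, F x) * ∑ z : P2 × P3, G z.1 * H z.2 := by rw [Finset.sum_mul]
    _ = (∑ x, F x) * ((∑ x, G x) * (∑ x, H x)) := by
        congr 1
        rw [Fintype.sum_prod_type]
        calc ∑ b : P2, ∑ c : P3, G b * H c
            = ∑ b : P2, G b * ∑ c : P3, H c := by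
              exact Finset.sum_congr rfl fun b _ => (Finset.mul_sum _ _ _).symm
          _ = (∑ x, G x) * (∑ x, H x) := by rw [Finset.sum_mul]
    _ = _ := by ring

lemma step_aux {α β γ : Type} [Fintype α] [Fintype β] [Fintype γ]
    {S T : Type} [Fintype S] [Fintype T]
    (a1 : S → α → ℝ) (a2 : S → β → ℝ) (a3 : S → γ → ℝ)
    (b1 : T → α → ℝ) (b2 : T → β → ℝ) (b3 : T → γ → ℝ) :
    ∑ r : α × β × γ,
        (∑ s, a1 s r.1 * a2 s r.2.1 * a3 s r.2.2)
          * (∑ t, b1 t r.1 * b2 t r.2.1 * b3 t r.2.2)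
      = ∑ t, ∑ s,
          (∑ x, a1 s x * b1 t x) * (∑ x, a2 s x * b2 t x) * (∑ x, a3 s x * b3 t x) := by
  have hR : ∀ (t : T) (s : S),
      (∑ x, a1 s x * b1 t x) * (∑ x, a2 s x * b2 t x) * (∑ x, a3 s x * b3 t x)
        = ∑ r : α × β × γ,
            (a1 s r.1 * b1 t r.1) * (a2 s r.2.1 * b2 t r.2.1) * (a3 s r.2.2 * b3 t r.2.2) :=
    fun t s => (sum_prod3 (fun x => a1 s x * b1 t x) (fun x => a2 s x * b2 t x)
      (fun x => a3 s x * b3 t x)).symm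
  calc ∑ r : α × β × γ,
        (∑ s, a1 s r.1 * a2 s r.2.1 * a3 s r.2.2)
          * (∑ t, b1 t r.1 * b2 t r.2.1 * b3 t r.2.2)
      = ∑ r : α × β × γ, ∑ s, ∑ t,
          (a1 s r.1 * b1 t r.1) * (a2 s r.2.1 * b2 t r.2.1) * (a3 s r.2.2 * b3 t r.2.2) := by
        refine Finset.sum_congr rfl fun r _ => ?_
        rw [Finset.sum_mul_sum]
        exact Finset.sum_congr rfl fun s _ => Finset.sum_congr rfl fun t _ => by ring
    _ = ∑ s, ∑ t, ∑ r : α × β × γ,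
          (a1 s r.1 * b1 t r.1) * (a2 s r.2.1 * b2 t r.2.1) * (a3 s r.2.2 * b3 t r.2.2) := by
        rw [Finset.sum_comm]
        exact Finset.sum_congr rfl fun s _ => Finset.sum_comm
    _ = ∑ t, ∑ s, ∑ r : α × β × γ,
          (a1 s r.1 * b1 t r.1) * (a2 s r.2.1 * b2 t r.2.1) * (a3 s r.2.2 * b3 t r.2.2) :=
        Finset.sum_comm
    _ = _ := Finset.sum_congr rfl fun t _ => Finset.sum_congr rfl fun s _ => (hR t s).symm

lemma key (R1 R2 R3 : ℕ → ℕ) (S : ℕ → Type) [∀ m, Fintype (S m)]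
    (M1 : ∀ m, S m → Matrix (Fin (R1 m)) (Fin (R1 (m + 1))) ℝ)
    (M2 : ∀ m, S m → Matrix (Fin (R2 m)) (Fin (R2 (m + 1))) ℝ)
    (M3 : ∀ m, S m → Matrix (Fin (R3 m)) (Fin (R3 (m + 1))) ℝ) (k : ℕ) :
    chainProd (fun m => Fin (R1 m) × Fin (R2 m) × Fin (R3 m))
      (fun m => Matrix.of fun p q =>
        ∑ s : S m, M1 m s p.1 q.1 * M2 m s p.2.1 q.2.1 * M3 m s p.2.2 q.2.2) k
    = Matrix.of fun p q => ∑ s : ∀ m : Fin k, S m,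
        chainProd (fun m => Fin (R1 m)) (fun m => if h : m < k then M1 m (s ⟨m, h⟩) else 0) k p.1 q.1
        * chainProd (fun m => Fin (R2 m)) (fun m => if h : m < k then M2 m (s ⟨m, h⟩) else 0) k p.2.1 q.2.1
        * chainProd (fun m => Fin (R3 m)) (fun m => if h : m < k then M3 m (s ⟨m, h⟩) else 0) k p.2.2 q.2.2 := by
  induction k with
  | zero =>
      ext p q
      show (1 : Matrix _ _ ℝ) p q = _
      rw [Matrix.of_apply]
      have : ∀ s : ∀ m : Fin 0, S m,
          chainProd (fun m => Fin (R1 m)) (fun m => if h : m < 0 then M1 m (s ⟨m, h⟩) else 0) 0 p.1 q.1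
          * chainProd (fun m => Fin (R2 m)) (fun m => if h : m < 0 then M2 m (s ⟨m, h⟩) else 0) 0 p.2.1 q.2.1
          * chainProd (fun m => Fin (R3 m)) (fun m => if h : m < 0 then M3 m (s ⟨m, h⟩) else 0) 0 p.2.2 q.2.2
          = (1 : Matrix _ _ ℝ) p.1 q.1 * (1 : Matrix _ _ ℝ) p.2.1 q.2.1
            * (1 : Matrix _ _ ℝ) p.2.2 q.2.2 := fun s => rfl
      rw [Finset.sum_congr rfl (fun s _ => this s), Finset.sum_const]
      simp only [Finset.card_univ, Fintype.card_unique, one_smul]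
      by_cases h1 : p.1 = q.1 <;> by_cases h2 : p.2.1 = q.2.1 <;> by_cases h3 : p.2.2 = q.2.2 <;>
        simp [Matrix.one_apply, Prod.ext_iff, h1, h2, h3]
  | succ k ih =>
      have unf : chainProd (fun m => Fin (R1 m) × Fin (R2 m) × Fin (R3 m))
          (fun m => Matrix.of fun p q =>
            ∑ s : S m, M1 m s p.1 q.1 * M2 m s p.2.1 q.2.1 * M3 m s p.2.2 q.2.2) (k + 1)
          = chainProd (fun m => Fin (R1 m) × Fin (R2 m) × Fin (R3 m))
            (fun m => Matrix.of fun p q =>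
              ∑ s : S m, M1 m s p.1 q.1 * M2 m s p.2.1 q.2.1 * M3 m s p.2.2 q.2.2) k
            * (Matrix.of (fun p q =>
              ∑ s : S k, M1 k s p.1 q.1 * M2 k s p.2.1 q.2.1 * M3 k s p.2.2 q.2.2) :
                Matrix (Fin (R1 k) × Fin (R2 k) × Fin (R3 k))
                  (Fin (R1 (k + 1)) × Fin (R2 (k + 1)) × Fin (R3 (k + 1))) ℝ) := rfl
      rw [unf, ih]
      ext p q
      rw [Matrix.mul_apply, Matrix.of_apply]
      simp only [Matrix.of_apply]
      rw [step_aux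
        (fun (s : ∀ m : Fin k, S m) x => chainProd (fun m => Fin (R1 m))
          (fun m => if h : m < k then M1 m (s ⟨m, h⟩) else 0) k p.1 x)
        (fun s x => chainProd (fun m => Fin (R2 m))
          (fun m => if h : m < k then M2 m (s ⟨m, h⟩) else 0) k p.2.1 x)
        (fun s x => chainProd (fun m => Fin (R3 m))
          (fun m => if h : m < k then M3 m (s ⟨m, h⟩) else 0) k p.2.2 x)
        (fun (t : S k) x => M1 k t x q.1)
        (fun t x => M2 k t x q.2.1)
        (fun t x => M3 k t x q.2.2)]
      symm
      rw [← Equiv.sum_comp (Fin.snocEquiv (fun i : Fin (k + 1) => S i))]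
      rw [Fintype.sum_prod_type]
      refine Finset.sum_congr rfl fun t _ => Finset.sum_congr rfl fun s _ => ?_
      have hc : ∀ (R : ℕ → ℕ) (M : ∀ m, S m → Matrix (Fin (R m)) (Fin (R (m + 1))) ℝ),
          chainProd (fun m => Fin (R m))
            (fun m => if h : m < k + 1 then
              M m ((Fin.snocEquiv (fun i : Fin (k + 1) => S i) (t, s)) ⟨m, h⟩) else 0) (k + 1)
          = chainProd (fun m => Fin (R m)) (fun m => if h : m < k then M m (s ⟨m, h⟩) else 0) k
              * M k t := by
        intro R M
        have unf2 : chainProd (fun m => Fin (R m))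
            (fun m => if h : m < k + 1 then
              M m ((Fin.snocEquiv (fun i : Fin (k + 1) => S i) (t, s)) ⟨m, h⟩) else 0) (k + 1)
            = chainProd (fun m => Fin (R m))
              (fun m => if h : m < k + 1 then
                M m ((Fin.snocEquiv (fun i : Fin (k + 1) => S i) (t, s)) ⟨m, h⟩) else 0) k
              * (if h : k < k + 1 then
                  M k ((Fin.snocEquiv (fun i : Fin (k + 1) => S i) (t, s)) ⟨k, h⟩) else 0) := rfl
        rw [unf2]
        congr 1
        · refine chainProd_congr _ _ _ _ (fun m hm => ?_)
          rw [dif_pos (hm.trans (Nat.lt_succ_self k)), dif_pos hm]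
          exact congrArg (M m)
            (show (Fin.snoc s t : ∀ i : Fin (k + 1), S i) (Fin.castSucc ⟨m, hm⟩) = s ⟨m, hm⟩
              from Fin.snoc_castSucc _ _ _)
        · rw [dif_pos (Nat.lt_succ_self k)]
          exact congrArg (M k)
            (show (Fin.snoc s t : ∀ i : Fin (k + 1), S i) (Fin.last k) = t
              from Fin.snoc_last _ _)
      rw [hc R1 M1, hc R2 M2, hc R3 M3]
      simp [Matrix.mul_apply]

lemma sum_triple_prod {α β γ α' β' γ' : Type} [Fintype α] [Fintype β] [Fintype γ]
    [Fintype α'] [Fintype β'] [Fintype γ']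
    (f : α → α' → ℝ) (g : β → β' → ℝ) (h : γ → γ' → ℝ) :
    ∑ p : α × β × γ, ∑ q : α' × β' × γ',
        f p.1 q.1 * g p.2.1 q.2.1 * h p.2.2 q.2.2
      = (∑ a, ∑ a', f a a') * (∑ b, ∑ b', g b b') * (∑ c, ∑ c', h c c') :=
  calc ∑ p : α × β × γ, ∑ q : α' × β' × γ',
        f p.1 q.1 * g p.2.1 q.2.1 * h p.2.2 q.2.2
      = ∑ p : α × β × γ, (∑ x, f p.1 x) * (∑ x, g p.2.1 x) * (∑ x, h p.2.2 x) :=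
        Finset.sum_congr rfl fun p _ =>
          sum_prod3 (fun x => f p.1 x) (fun x => g p.2.1 x) (fun x => h p.2.2 x)
    _ = _ := sum_prod3 (fun a => ∑ x, f a x) (fun b => ∑ x, g b x) (fun c => ∑ x, h c x)

def piProdEquiv {N : ℕ} (A B : ℕ → Type) :
    ((∀ m : Fin N, A m) × (∀ m : Fin N, B m)) ≃ (∀ m : Fin N, A m × B m) where
  toFun p m := (p.1 m, p.2 m)
  invFun f := (fun m => (f m).1, fun m => (f m).2)
  left_inv p := rfl
  right_inv f := rfl

lemma assemble {ι κ S : Type} [Fintype ι] [Fintype κ] [Fintype S]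
    (e : S ≃ ι × κ) {α β γ α' β' γ' : Type} [Fintype α] [Fintype β] [Fintype γ]
    [Fintype α'] [Fintype β'] [Fintype γ']
    (X : ι → Matrix α α' ℝ) (Y : ι → κ → Matrix β β' ℝ) (W : κ → Matrix γ γ' ℝ) :
    ∑ i, ∑ j, matEntry (X i) * matEntry (Y i j) * matEntry (W j)
      = matEntry (Matrix.of fun (p : α × β × γ) (q : α' × β' × γ') =>
          ∑ s, X (e s).1 p.1 q.1 * Y (e s).1 (e s).2 p.2.1 q.2.1 * W (e s).2 p.2.2 q.2.2) :=
  calc ∑ i, ∑ j, matEntry (X i) * matEntry (Y i j) * matEntry (W j)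
      = ∑ x : ι × κ, matEntry (X x.1) * matEntry (Y x.1 x.2) * matEntry (W x.2) :=
        (Fintype.sum_prod_type (f := fun x : ι × κ =>
          matEntry (X x.1) * matEntry (Y x.1 x.2) * matEntry (W x.2))).symm
    _ = ∑ s, matEntry (X (e s).1) * matEntry (Y (e s).1 (e s).2) * matEntry (W (e s).2) :=
        (Equiv.sum_comp e fun x : ι × κ =>
          matEntry (X x.1) * matEntry (Y x.1 x.2) * matEntry (W x.2)).symm
    _ = ∑ s, ∑ p : α × β × γ, ∑ q : α' × β' × γ',
          X (e s).1 p.1 q.1 * Y (e s).1 (e s).2 p.2.1 q.2.1 * W (e s).2 p.2.2 q.2.2 :=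
        Finset.sum_congr rfl fun s _ =>
          (sum_triple_prod (fun a a' => X (e s).1 a a')
            (fun b b' => Y (e s).1 (e s).2 b b') (fun c c' => W (e s).2 c c')).symm
    _ = ∑ p : α × β × γ, ∑ s, ∑ q : α' × β' × γ',
          X (e s).1 p.1 q.1 * Y (e s).1 (e s).2 p.2.1 q.2.1 * W (e s).2 p.2.2 q.2.2 :=
        Finset.sum_comm
    _ = ∑ p : α × β × γ, ∑ q : α' × β' × γ', ∑ s,
          X (e s).1 p.1 q.1 * Y (e s).1 (e s).2 p.2.1 q.2.1 * W (e s).2 p.2.2 q.2.2 :=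
        Finset.sum_congr rfl fun p _ => Finset.sum_comm
    _ = _ := rfl

/-- For U, V in block-n TT format (the K-mode carried by the n-th core; the
other cores do not depend on k) and A in matrix TT format, the (k₁,k₂) entry of
UᵀAV equals the chain product Z^{(1)} ⋯ Z^{(n-1)} Z_K^{(n)} Z^{(n+1)} ⋯ Z^{(N)}
of the Kronecker-structured matrices
Z^{(m)} = Σ_{i_m,j_m} U^{(m)}_{i_m} ⊗ A^{(m)}_{i_m,j_m} ⊗ V^{(m)}_{j_m}. -/
theorem stmt_16 (N n : ℕ) (hn : n < N) (K : ℕ)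
    (I J RU RA RV : ℕ → ℕ)
    (hRU0 : RU 0 = 1) (hRUN : RU N = 1)
    (hRA0 : RA 0 = 1) (hRAN : RA N = 1)
    (hRV0 : RV 0 = 1) (hRVN : RV N = 1)
    (UC : ∀ m, Fin K → Fin (I m) → Matrix (Fin (RU m)) (Fin (RU (m + 1))) ℝ)
    (AC : ∀ m, Fin (I m) → Fin (J m) → Matrix (Fin (RA m)) (Fin (RA (m + 1))) ℝ)
    (VC : ∀ m, Fin K → Fin (J m) → Matrix (Fin (RV m)) (Fin (RV (m + 1))) ℝ)
    (hU : ∀ m, m ≠ n → ∀ k k', UC m k = UC m k')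
    (hV : ∀ m, m ≠ n → ∀ k k', VC m k = VC m k')
    (k1 k2 : Fin K) :
    (∑ i : ∀ m : Fin N, Fin (I m), ∑ j : ∀ m : Fin N, Fin (J m),
        matEntry (chainProd (fun m => Fin (RU m))
            (fun m => if h : m < N then UC m k1 (i ⟨m, h⟩) else 0) N)
          * matEntry (chainProd (fun m => Fin (RA m))
              (fun m => if h : m < N then AC m (i ⟨m, h⟩) (j ⟨m, h⟩) else 0) N)
          * matEntry (chainProd (fun m => Fin (RV m))
              (fun m => if h : m < N then VC m k2 (j ⟨m, h⟩) else 0) N))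
      = matEntry (chainProd (fun m => Fin (RU m) × Fin (RA m) × Fin (RV m))
          (fun m => if h : m < N then
              Matrix.of (fun p q =>
                ∑ im : Fin (I m), ∑ jm : Fin (J m),
                  UC m k1 im p.1 q.1 * AC m im jm p.2.1 q.2.1
                    * VC m k2 jm p.2.2 q.2.2)
            else 0) N) := by
  classical
  have hZ : chainProd (fun m => Fin (RU m) × Fin (RA m) × Fin (RV m))
      (fun m => if h : m < N then
          Matrix.of (fun p q =>
            ∑ im : Fin (I m), ∑ jm : Fin (J m),
              UC m k1 im p.1 q.1 * AC m im jm p.2.1 q.2.1 * VC m k2 jm p.2.2 q.2.2)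
        else 0) N
      = chainProd (fun m => Fin (RU m) × Fin (RA m) × Fin (RV m))
        (fun m => Matrix.of fun p q =>
          ∑ s : Fin (I m) × Fin (J m),
            UC m k1 s.1 p.1 q.1 * AC m s.1 s.2 p.2.1 q.2.1 * VC m k2 s.2 p.2.2 q.2.2) N := by
    refine chainProd_congr _ _ _ _ (fun m hm => ?_)
    rw [dif_pos hm]
    ext p q
    simp [Fintype.sum_prod_type]
  rw [hZ, key RU RA RV (fun m => Fin (I m) × Fin (J m))
      (fun m s => UC m k1 s.1) (fun m s => AC m s.1 s.2) (fun m s => VC m k2 s.2) N]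
  exact assemble (piProdEquiv (fun m => Fin (I m)) (fun m => Fin (J m))).symm
    (fun i => chainProd (fun m => Fin (RU m))
      (fun m => if h : m < N then UC m k1 (i ⟨m, h⟩) else 0) N)
    (fun i j => chainProd (fun m => Fin (RA m))
      (fun m => if h : m < N then AC m (i ⟨m, h⟩) (j ⟨m, h⟩) else 0) N)
    (fun j => chainProd (fun m => Fin (RV m))
      (fun m => if h : m < N then VC m k2 (j ⟨m, h⟩) else 0) N)
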